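/- In the unitization 𝒜*₊ of 𝒜*, the left ideal 𝒜*₊·E₂ generated by the idempotent E₂ = E_{4,4} is a 2-dimensional simple left 𝒜*₊-module, spanned by the matrix units E_{4,4} and E_{5,4}. -/

import Mathlib

open Matrix

noncomputable section

/-- The allowed matrix positions (0-indexed versions of
`(1,2),(1,3),(2,2),(2,3),(4,4),(4,5),(5,4),(5,5)`). -/
def positions : Finset (Fin 5 × Fin 5) :=
  {(0, 1), (0, 2), (1, 1), (1, 2), (3, 3), (3, 4), (4, 3), (4, 4)}

/-- The algebra `𝒜* ⊆ M₅(ℂ)`: matrices supported on the allowed positions. -/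
def AstarSet : Set (Matrix (Fin 5) (Fin 5) ℂ) :=
  {M | ∀ i j, (i, j) ∉ positions → M i j = 0}

/-- The unitization `𝒜*₊ = 𝒜* ⊕ ℂ·𝟙₅`, realized as the subalgebra of `M₅(ℂ)`
generated by `𝒜*`. -/
def AstarPlus : Subalgebra ℂ (Matrix (Fin 5) (Fin 5) ℂ) := Algebra.adjoin ℂ AstarSet

/-- The subspace spanned by the matrix units `E_{4,4}` and `E_{5,4}` (0-indexed `(3,3)`,
`(4,3)`). -/
def P2mod : Submodule ℂ (Matrix (Fin 5) (Fin 5) ℂ) :=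
  Submodule.span ℂ {Matrix.single 3 3 (1 : ℂ), Matrix.single 4 3 (1 : ℂ)}

/-- Abbreviation for matrix units in `M₅(ℂ)`. -/
abbrev EE (p q : Fin 5) : Matrix (Fin 5) (Fin 5) ℂ := Matrix.single p q (1 : ℂ)

/-- Matrices whose columns 3 and 4 are supported on rows 3, 4. -/
def colOK : Subalgebra ℂ (Matrix (Fin 5) (Fin 5) ℂ) where
  carrier := {M | ∀ i : Fin 5, i ≠ 3 → i ≠ 4 → M i 3 = 0 ∧ M i 4 = 0}
  mul_mem' := by
    intro a b ha hb i h3 h4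
    have h03 := (hb 0 (by decide) (by decide)).1
    have h13 := (hb 1 (by decide) (by decide)).1
    have h23 := (hb 2 (by decide) (by decide)).1
    have h04 := (hb 0 (by decide) (by decide)).2
    have h14 := (hb 1 (by decide) (by decide)).2
    have h24 := (hb 2 (by decide) (by decide)).2
    have ha3 := (ha i h3 h4).1
    have ha4 := (ha i h3 h4).2
    constructor <;>
      simp [Matrix.mul_apply, Fin.sum_univ_five, h03, h13, h23, h04, h14, h24, ha3, ha4]
  add_mem' := by
    intro a b ha hb i h3 h4
    have h1 := ha i h3 h4; have h2 := hb i h3 h4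
    constructor <;> simp [Matrix.add_apply, h1.1, h1.2, h2.1, h2.2]
  algebraMap_mem' := by
    intro r i h3 h4
    constructor <;> simp [Matrix.algebraMap_matrix_apply, h3, h4]

lemma astarSet_le_colOK : AstarSet ⊆ (colOK : Set (Matrix (Fin 5) (Fin 5) ℂ)) := by
  intro M hM i h3 h4
  constructor <;> apply hM <;> fin_cases i <;> simp_all [positions]

lemma astarPlus_le_colOK : AstarPlus ≤ colOK := Algebra.adjoin_le astarSet_le_colOK

lemma std_mem_astarSet {p q : Fin 5} (h : (p, q) ∈ positions) : EE p q ∈ AstarSet := by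
  intro i j hij
  simp only [EE, Matrix.single, Matrix.of_apply, ite_eq_right_iff, one_ne_zero]
  rintro ⟨rfl, rfl⟩
  exact (hij h).elim

lemma mul_E33_eq (m : Matrix (Fin 5) (Fin 5) ℂ)
    (h : ∀ i : Fin 5, i ≠ 3 → i ≠ 4 → m i 3 = 0) :
    m * EE 3 3 = m 3 3 • EE 3 3 + m 4 3 • EE 4 3 := by
  have h0 := h 0 (by decide) (by decide)
  have h1 := h 1 (by decide) (by decide)
  have h2 := h 2 (by decide) (by decide)
  ext i j
  fin_cases i <;> fin_cases j <;>
    simp [Matrix.mul_apply, Fin.sum_univ_five, Matrix.single, h0, h1, h2]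

lemma mul_E43_eq (m : Matrix (Fin 5) (Fin 5) ℂ)
    (h : ∀ i : Fin 5, i ≠ 3 → i ≠ 4 → m i 4 = 0) :
    m * EE 4 3 = m 3 4 • EE 3 3 + m 4 4 • EE 4 3 := by
  have h0 := h 0 (by decide) (by decide)
  have h1 := h 1 (by decide) (by decide)
  have h2 := h 2 (by decide) (by decide)
  ext i j
  fin_cases i <;> fin_cases j <;>
    simp [Matrix.mul_apply, Fin.sum_univ_five, Matrix.single, h0, h1, h2]


/-- The left ideal `𝒜*₊·E₂` generated by the idempotent `E₂ = E_{4,4}` is a 2-dimensional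
simple left `𝒜*₊`-module, spanned by `E_{4,4}` and `E_{5,4}`. -/
theorem P2_is_simple :
    (P2mod : Set (Matrix (Fin 5) (Fin 5) ℂ)) =
      (fun x => x * Matrix.single 3 3 (1 : ℂ)) '' (AstarPlus : Set (Matrix (Fin 5) (Fin 5) ℂ)) ∧
    Module.finrank ℂ P2mod = 2 ∧
    (∀ a ∈ AstarPlus, ∀ t ∈ P2mod, a * t ∈ P2mod) ∧
    P2mod ≠ ⊥ ∧
    (∀ T : Submodule ℂ (Matrix (Fin 5) (Fin 5) ℂ), T ≤ P2mod →
      (∀ a ∈ AstarPlus, ∀ t ∈ T, a * t ∈ T) → T = ⊥ ∨ T = P2mod) := by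
  have hE33 : EE 3 3 ∈ AstarPlus := Algebra.subset_adjoin (std_mem_astarSet (by decide))
  have hE34 : EE 3 4 ∈ AstarPlus := Algebra.subset_adjoin (std_mem_astarSet (by decide))
  have hE43 : EE 4 3 ∈ AstarPlus := Algebra.subset_adjoin (std_mem_astarSet (by decide))
  have hE44 : EE 4 4 ∈ AstarPlus := Algebra.subset_adjoin (std_mem_astarSet (by decide))
  have hE33mem : EE 3 3 ∈ P2mod := Submodule.subset_span (by simp [EE])
  have hE43mem : EE 4 3 ∈ P2mod := Submodule.subset_span (by simp [EE])
  have hP2span : P2mod = Submodule.span ℂ {EE 3 3, EE 4 3} := rfl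
  refine ⟨?_, ?_, ?_, ?_, ?_⟩
  · apply Set.eq_of_subset_of_subset
    · intro x hx
      obtain ⟨a, b, rfl⟩ := Submodule.mem_span_pair.mp hx
      refine ⟨a • EE 3 3 + b • EE 4 3,
        add_mem (SMulMemClass.smul_mem a hE33) (SMulMemClass.smul_mem b hE43), ?_⟩
      show (a • EE 3 3 + b • EE 4 3) * EE 3 3 = _
      rw [add_mul, smul_mul_assoc, smul_mul_assoc, Matrix.single_mul_single_same,
        Matrix.single_mul_single_same, mul_one]
    · rintro x ⟨m, hm, rfl⟩
      show m * EE 3 3 ∈ (P2mod : Set _)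
      have hc := fun i h3 h4 => (astarPlus_le_colOK hm i h3 h4).1
      rw [mul_E33_eq m hc]
      exact add_mem (SMulMemClass.smul_mem _ hE33mem) (SMulMemClass.smul_mem _ hE43mem)
  · have hli : LinearIndependent ℂ ![EE 3 3, EE 4 3] := by
      rw [LinearIndependent.pair_iff]
      intro s t hst
      have h1 := congrFun (congrFun hst 3) 3
      have h2 := congrFun (congrFun hst 4) 3
      simp [Matrix.single] at h1 h2
      exact ⟨h1, h2⟩
    have hr := finrank_span_eq_card hli
    have hrange : Set.range ![EE 3 3, EE 4 3] = {EE 3 3, EE 4 3} := by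
      ext z; simp [Fin.exists_fin_two]; tauto
    rw [hrange] at hr
    rw [hP2span]
    simpa using hr
  · intro a ha t ht
    rw [hP2span] at ht ⊢
    obtain ⟨c, d, rfl⟩ := Submodule.mem_span_pair.mp ht
    have hc3 := fun i h3 h4 => (astarPlus_le_colOK ha i h3 h4).1
    have hc4 := fun i h3 h4 => (astarPlus_le_colOK ha i h3 h4).2
    rw [mul_add, mul_smul_comm, mul_smul_comm, mul_E33_eq a hc3, mul_E43_eq a hc4]
    have h33 : EE 3 3 ∈ Submodule.span ℂ {EE 3 3, EE 4 3} := Submodule.subset_span (by simp)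
    have h43 : EE 4 3 ∈ Submodule.span ℂ {EE 3 3, EE 4 3} := Submodule.subset_span (by simp)
    refine add_mem (Submodule.smul_mem _ _ ?_) (Submodule.smul_mem _ _ ?_) <;>
      exact add_mem (SMulMemClass.smul_mem _ h33) (SMulMemClass.smul_mem _ h43)
  · intro hbot
    have h0 : EE 3 3 = 0 := by simpa [hbot] using hE33mem
    have := congrFun (congrFun h0 3) 3
    simp [Matrix.single] at this
  · intro T hle hinv
    by_cases hT : T = ⊥
    · exact Or.inl hT
    right
    obtain ⟨t, htT, htne⟩ := Submodule.exists_mem_ne_zero_of_ne_bot hT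
    have htP : t ∈ Submodule.span ℂ {EE 3 3, EE 4 3} := hP2span ▸ hle htT
    obtain ⟨a, b, rfl⟩ := Submodule.mem_span_pair.mp htP
    have ne34 : (3 : Fin 5) ≠ 4 := by decide
    have ne43 : (4 : Fin 5) ≠ 3 := by decide
    have m33 : EE 3 3 * (a • EE 3 3 + b • EE 4 3) = a • EE 3 3 := by
      rw [mul_add, mul_smul_comm, mul_smul_comm, Matrix.single_mul_single_same,
        Matrix.single_mul_single_of_ne (h := ne34), mul_one, smul_zero, add_zero]
    have m43 : EE 4 3 * (a • EE 3 3 + b • EE 4 3) = a • EE 4 3 := by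
      rw [mul_add, mul_smul_comm, mul_smul_comm, Matrix.single_mul_single_same,
        Matrix.single_mul_single_of_ne (h := ne34), mul_one, smul_zero, add_zero]
    have m34 : EE 3 4 * (a • EE 3 3 + b • EE 4 3) = b • EE 3 3 := by
      rw [mul_add, mul_smul_comm, mul_smul_comm, Matrix.single_mul_single_same,
        Matrix.single_mul_single_of_ne (h := ne43), mul_one, smul_zero, zero_add]
    have m44 : EE 4 4 * (a • EE 3 3 + b • EE 4 3) = b • EE 4 3 := by
      rw [mul_add, mul_smul_comm, mul_smul_comm, Matrix.single_mul_single_same,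
        Matrix.single_mul_single_of_ne (h := ne43), mul_one, smul_zero, zero_add]
    have hab : a ≠ 0 ∨ b ≠ 0 := by
      by_contra h
      push_neg at h
      exact htne (by simp [h.1, h.2])
    have hgen : EE 3 3 ∈ T ∧ EE 4 3 ∈ T := by
      rcases hab with ha0 | hb0
      · constructor
        · have h := hinv _ hE33 _ htT
          rw [m33] at h
          have h2 := T.smul_mem a⁻¹ h
          rwa [smul_smul, inv_mul_cancel₀ ha0, one_smul] at h2
        · have h := hinv _ hE43 _ htT
          rw [m43] at h
          have h2 := T.smul_mem a⁻¹ h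
          rwa [smul_smul, inv_mul_cancel₀ ha0, one_smul] at h2
      · constructor
        · have h := hinv _ hE34 _ htT
          rw [m34] at h
          have h2 := T.smul_mem b⁻¹ h
          rwa [smul_smul, inv_mul_cancel₀ hb0, one_smul] at h2
        · have h := hinv _ hE44 _ htT
          rw [m44] at h
          have h2 := T.smul_mem b⁻¹ h
          rwa [smul_smul, inv_mul_cancel₀ hb0, one_smul] at h2
    refine le_antisymm hle ?_
    rw [hP2span, Submodule.span_le]
    rintro x (rfl | rfl)
    · exact hgen.1
    · exact hgen.2
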